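/- If C is a perfect 1-error-correcting binary code of length 15 containing 0, then the number of codewords of Hamming weight 3 in C equals 35. -/
import Mathlib

open Finset

private def psupp (x : Fin 15 → ZMod 2) : Finset (Fin 15) :=
  Finset.univ.filter (fun i => x i ≠ 0)

private def pind (S : Finset (Fin 15)) : Fin 15 → ZMod 2 := fun i => if i ∈ S then 1 else 0

private lemma pnorm_eq (x : Fin 15 → ZMod 2) : hammingNorm x = (psupp x).card := rfl

private lemma psupp_pind (S : Finset (Fin 15)) : psupp (pind S) = S := by
  ext i
  simp only [psupp, pind, mem_filter, mem_univ, true_and]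
  by_cases h : i ∈ S <;> simp [h]

private lemma pind_psupp (x : Fin 15 → ZMod 2) : pind (psupp x) = x := by
  funext i
  have h1 : ∀ a : ZMod 2, a ≠ 0 → a = 1 := by decide
  by_cases h : x i = 0 <;>
    simp [pind, psupp, h]
  exact (h1 _ h).symm

private lemma pdist_eq (x y : Fin 15 → ZMod 2) :
    hammingDist x y = (psupp x \ psupp y).card + (psupp y \ psupp x).card := by
  have h2 : ∀ a b : ZMod 2, (a ≠ b) ↔ ((a ≠ 0 ∧ b = 0) ∨ (b ≠ 0 ∧ a = 0)) := by decide
  have : hammingDist x y = ((psupp x \ psupp y) ∪ (psupp y \ psupp x)).card := by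
    show (Finset.univ.filter (fun i => x i ≠ y i)).card = _
    congr 1
    ext i
    simp only [mem_filter, mem_univ, true_and, mem_union, mem_sdiff, psupp, h2 (x i) (y i)]
    tauto
  rw [this, Finset.card_union_of_disjoint disjoint_sdiff_sdiff]

/-- If C is a perfect 1-error-correcting binary code of length 15 containing 0,
then C has exactly 35 codewords of Hamming weight 3. -/
theorem perfect_code_weight3_count
    (C : Set (Fin 15 → ZMod 2)) (h0 : (0 : Fin 15 → ZMod 2) ∈ C)
    (hperfect : ∀ x : Fin 15 → ZMod 2, ∃! c, c ∈ C ∧ hammingDist x c ≤ 1) :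
    {c ∈ C | hammingNorm c = 3}.ncard = 35 := by
  classical
  choose g hg hu using hperfect
  have hgC : ∀ x, g x ∈ C := fun x => (hg x).1
  have hgd : ∀ x, hammingDist x (g x) ≤ 1 := fun x => (hg x).2
  have hsupp0 : psupp (0 : Fin 15 → ZMod 2) = ∅ := by
    ext i; simp [psupp]
  -- minimum weight of nonzero codewords is ≥ 3
  have hmin : ∀ c ∈ C, c ≠ 0 → 3 ≤ hammingNorm c := by
    intro c hc hc0
    by_contra hlt
    push_neg at hlt
    have hne : (psupp c).Nonempty := by
      rcases Finset.eq_empty_or_nonempty (psupp c) with h | h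
      · exact absurd (by rw [← pind_psupp c, h, ← hsupp0, pind_psupp]) hc0
      · exact h
    obtain ⟨i, hi⟩ := hne
    set x := pind {i} with hx
    have hsx : psupp x = {i} := psupp_pind _
    have hsub : psupp x ⊆ psupp c := by rw [hsx]; simpa using hi
    have hx0 : hammingDist x 0 ≤ 1 := by
      rw [pdist_eq, hsupp0]
      simp [hsx]
    have hxc : hammingDist x c ≤ 1 := by
      rw [pdist_eq, Finset.sdiff_eq_empty_iff_subset.2 hsub]
      have h1 : (psupp c \ psupp x).card ≤ (psupp c).card - 1 := by
        have := Finset.card_sdiff_of_subset hsub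
        rw [this, hsx]; simp
      have h2 : (psupp c).card ≤ 2 := by
        rw [pnorm_eq] at hlt; omega
      simp only [Finset.card_empty]
      omega
    have e0 : (0 : Fin 15 → ZMod 2) = g x := hu x 0 ⟨h0, hx0⟩
    have ec : c = g x := hu x c ⟨hc, hxc⟩
    exact hc0 (ec.trans e0.symm)
  set S3 : Finset (Fin 15 → ZMod 2) :=
    Finset.univ.filter (fun c => c ∈ C ∧ hammingNorm c = 3) with hS3
  have hset : {c ∈ C | hammingNorm c = 3} = ↑S3 := by
    ext c; simp [hS3]
  rw [hset, Set.ncard_coe_finset]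
  set W2 : Finset (Fin 15 → ZMod 2) :=
    Finset.univ.filter (fun x => hammingNorm x = 2) with hW2
  -- key: for weight-2 x, g x is a weight-3 codeword containing x
  have key : ∀ x ∈ W2, g x ∈ S3 ∧ psupp x ⊆ psupp (g x) := by
    intro x hx
    rw [hW2, mem_filter] at hx
    have hwx : (psupp x).card = 2 := by rw [← pnorm_eq]; exact hx.2
    have hgx0 : g x ≠ 0 := by
      intro h
      have := hgd x
      rw [h, hammingDist_zero_right, pnorm_eq, hwx] at this
      omega
    have h3 : 3 ≤ hammingNorm (g x) := hmin _ (hgC x) hgx0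
    have hd := hgd x
    rw [pdist_eq] at hd
    have hic : ((psupp (g x)) ∩ (psupp x)).card + ((psupp (g x)) \ (psupp x)).card
        = (psupp (g x)).card := Finset.card_inter_add_card_sdiff _ _
    have hix : ((psupp x) ∩ (psupp (g x))).card + ((psupp x) \ (psupp (g x))).card
        = (psupp x).card := Finset.card_inter_add_card_sdiff _ _
    have hle : ((psupp (g x)) ∩ (psupp x)).card ≤ (psupp x).card :=
      Finset.card_le_card (Finset.inter_subset_right)
    have hcomm : ((psupp x) ∩ (psupp (g x))).card = ((psupp (g x)) ∩ (psupp x)).card := by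
      rw [Finset.inter_comm]
    rw [pnorm_eq] at h3
    have hsd : (psupp x \ psupp (g x)).card = 0 := by omega
    have hw3 : (psupp (g x)).card = 3 := by omega
    refine ⟨?_, Finset.sdiff_eq_empty_iff_subset.1 (Finset.card_eq_zero.1 hsd)⟩
    rw [hS3, mem_filter]
    exact ⟨mem_univ _, hgC x, by rw [pnorm_eq]; exact hw3⟩
  have hmaps : ∀ x ∈ W2, g x ∈ S3 := fun x hx => (key x hx).1
  -- total count of weight-2 vectors
  have hW2card : W2.card = 105 := by
    have : W2.card = ((Finset.univ : Finset (Fin 15)).powersetCard 2).card := by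
      refine Finset.card_bij' (fun x _ => psupp x) (fun S _ => pind S) ?_ ?_ ?_ ?_
      · intro x hx
        rw [Finset.mem_powersetCard]
        rw [hW2, mem_filter] at hx
        exact ⟨Finset.subset_univ _, by rw [← pnorm_eq]; exact hx.2⟩
      · intro S hS
        rw [Finset.mem_powersetCard] at hS
        rw [hW2, mem_filter]
        exact ⟨mem_univ _, by rw [pnorm_eq, psupp_pind]; exact hS.2⟩
      · intro x _; exact pind_psupp x
      · intro S _; exact psupp_pind S
    rw [this, Finset.card_powersetCard, Finset.card_univ, Fintype.card_fin]; decide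
  -- each fiber has exactly 3 elements
  have hfiber : ∀ c ∈ S3, (W2.filter (fun x => g x = c)).card = 3 := by
    intro c hc
    rw [hS3, mem_filter] at hc
    have hcC : c ∈ C := hc.2.1
    have hwc : (psupp c).card = 3 := by rw [← pnorm_eq]; exact hc.2.2
    have : (W2.filter (fun x => g x = c)).card = ((psupp c).powersetCard 2).card := by
      refine Finset.card_bij' (fun x _ => psupp x) (fun S _ => pind S) ?_ ?_ ?_ ?_
      · intro x hx
        rw [mem_filter] at hx
        obtain ⟨hxW, hxg⟩ := hx
        rw [Finset.mem_powersetCard]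
        have := (key x hxW).2
        rw [hxg] at this
        refine ⟨this, ?_⟩
        rw [hW2, mem_filter] at hxW
        rw [← pnorm_eq]; exact hxW.2
      · intro S hS
        rw [Finset.mem_powersetCard] at hS
        obtain ⟨hSsub, hS2⟩ := hS
        rw [mem_filter]
        have hw : hammingNorm (pind S) = 2 := by rw [pnorm_eq, psupp_pind]; exact hS2
        have hd : hammingDist (pind S) c ≤ 1 := by
          rw [pdist_eq, psupp_pind, Finset.sdiff_eq_empty_iff_subset.2 hSsub]
          rw [Finset.card_sdiff_of_subset hSsub, hwc, hS2]
          simp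
        constructor
        · rw [hW2, mem_filter]; exact ⟨mem_univ _, hw⟩
        · exact (hu _ c ⟨hcC, hd⟩).symm
      · intro x _; exact pind_psupp x
      · intro S _; exact psupp_pind S
    rw [this, Finset.card_powersetCard, hwc]; decide
  have hsum := Finset.card_eq_sum_card_fiberwise hmaps
  rw [Finset.sum_congr rfl hfiber, Finset.sum_const, smul_eq_mul] at hsum
  omega
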